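/- (G-computation / identifiability for HRMSM parameters) Suppose consistency, temporal ordering, the SRA, and positivity (every regimen ā(t-s+1,t) compatible with the observed past has positive conditional probability) hold. Then for every t with s-1 ≤ t ≤ K and every regimen ā(t-s+1,t), the mean of the counterfactual outcome Y_{ā(t-s+1,t)}(t+1) is identified by the G-computation formula over the restricted history: E[Y_{ā(t-s+1,t)}(t+1)] = Σ E[Y(t+1) | Ā(t)=(ā(t-s), ā(t-s+1,t)), L̄(t)=l̄(t)] · ∏_{j=t-s+1}^{t} P(L(j)=l(j) | Ā(j-1)=(ā(t-s), ā(t-s+1,j-1)), L̄(j-1)=l̄(j-1)) · P(Ā(t-s)=ā(t-s), L̄(t-s)=l̄(t-s)), where the sum ranges over all values ā(t-s) of the unintervened treatment history, and all values l̄(t) of the covariate history. -/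

import Mathlib

open Finset
open scoped Classical

noncomputable section

def pr {Ω : Type} [Fintype Ω] (μ : Ω → ℝ) (E : Ω → Prop) : ℝ :=
  ∑ ω, if E ω then μ ω else 0

def cpr {Ω : Type} [Fintype Ω] (μ : Ω → ℝ) (E F : Ω → Prop) : ℝ :=
  pr μ (fun ω => E ω ∧ F ω) / pr μ F

def ex {Ω : Type} [Fintype Ω] (μ : Ω → ℝ) (f : Ω → ℝ) : ℝ :=
  ∑ ω, f ω * μ ω

def cex {Ω : Type} [Fintype Ω] (μ : Ω → ℝ) (f : Ω → ℝ) (F : Ω → Prop) : ℝ :=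
  (∑ ω, if F ω then f ω * μ ω else 0) / pr μ F

def wsum {Ω : Type} [Fintype Ω] (μ : Ω → ℝ) (f : Ω → ℝ) (E : Ω → Prop) : ℝ :=
  ∑ ω, if E ω then f ω * μ ω else 0

section
variable {Ω 𝒜 ℒ : Type} [Fintype Ω] (μ : Ω → ℝ)

lemma cex_eq (f : Ω → ℝ) (F : Ω → Prop) : cex μ f F = wsum μ f F / pr μ F := rfl

lemma wsum_congr (f : Ω → ℝ) {E F : Ω → Prop} (h : ∀ ω, E ω ↔ F ω) :
    wsum μ f E = wsum μ f F :=
  Finset.sum_congr rfl (fun ω _ => if_congr (h ω) rfl rfl)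

lemma wsum_congr' {f g : Ω → ℝ} {E F : Ω → Prop} (h : ∀ ω, E ω ↔ F ω)
    (hf : ∀ ω, F ω → f ω = g ω) : wsum μ f E = wsum μ g F := by
  refine Finset.sum_congr rfl (fun ω _ => ?_)
  by_cases hF : F ω
  · rw [if_pos ((h ω).2 hF), if_pos hF, hf ω hF]
  · rw [if_neg (fun hE => hF ((h ω).1 hE)), if_neg hF]

lemma pr_congr {E F : Ω → Prop} (h : ∀ ω, E ω ↔ F ω) : pr μ E = pr μ F :=
  Finset.sum_congr rfl (fun ω _ => if_congr (h ω) rfl rfl)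

lemma cpr_congr {E E' F F' : Ω → Prop} (hE : ∀ ω, E ω ↔ E' ω) (hF : ∀ ω, F ω ↔ F' ω) :
    cpr μ E F = cpr μ E' F' := by
  unfold cpr
  rw [pr_congr μ hF, pr_congr μ (E := fun ω => E ω ∧ F ω) (F := fun ω => E' ω ∧ F' ω)
    (fun ω => and_congr (hE ω) (hF ω))]

lemma pr_nonneg (hμ : ∀ ω, 0 ≤ μ ω) (E : Ω → Prop) : 0 ≤ pr μ E := by
  apply Finset.sum_nonneg; intro ω _; split <;> simp [hμ ω]

lemma pr_mono (hμ : ∀ ω, 0 ≤ μ ω) {E F : Ω → Prop} (h : ∀ ω, E ω → F ω) :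
    pr μ E ≤ pr μ F := by
  apply Finset.sum_le_sum; intro ω _
  by_cases hE : E ω
  · simp [hE, h ω hE]
  · simp only [hE, if_false]; split <;> simp [hμ ω]

lemma mu_zero_of_pr_zero (hμ : ∀ ω, 0 ≤ μ ω) {E : Ω → Prop} (h : pr μ E = 0) :
    ∀ ω, E ω → μ ω = 0 := by
  intro ω hE
  have := (Finset.sum_eq_zero_iff_of_nonneg (by intro x _; split <;> simp [hμ x])).1 h ω
    (Finset.mem_univ ω)
  simpa [hE] using this

lemma pr_pos_exists (hμ : ∀ ω, 0 ≤ μ ω) {E : Ω → Prop} (h : 0 < pr μ E) :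
    ∃ ω, E ω ∧ 0 < μ ω := by
  by_contra hc
  push_neg at hc
  have : pr μ E = 0 := by
    apply Finset.sum_eq_zero; intro ω _
    by_cases hE : E ω
    · simp [hE, le_antisymm (hc ω hE) (hμ ω)]
    · simp [hE]
  exact absurd this (ne_of_gt h)

lemma pr_pos_of_ne (hμ : ∀ ω, 0 ≤ μ ω) {E : Ω → Prop} (h : pr μ E ≠ 0) : 0 < pr μ E :=
  lt_of_le_of_ne (pr_nonneg μ hμ E) (Ne.symm h)

lemma wsum_zero_of_pr_zero (hμ : ∀ ω, 0 ≤ μ ω) (f : Ω → ℝ) {E F : Ω → Prop}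
    (hEF : ∀ ω, E ω → F ω) (h : pr μ F = 0) : wsum μ f E = 0 := by
  apply Finset.sum_eq_zero; intro ω _
  by_cases hE : E ω
  · simp [hE, mu_zero_of_pr_zero μ hμ h ω (hEF ω hE)]
  · simp [hE]

lemma sra_phi (hμ : ∀ ω, 0 ≤ μ ω)
    (A : ℕ → Ω → 𝒜) (CL : (ℕ → 𝒜) → ℕ → Ω → ℒ)
    (j : ℕ) (a : 𝒜) (F : Ω → Prop)
    (hSRA : ∀ (x : (ℕ → 𝒜) → ℕ → ℒ), pr μ F > 0 →
      cpr μ (fun ω => A j ω = a ∧ ∀ (ar : ℕ → 𝒜) (jj : ℕ), CL ar jj ω = x ar jj) F =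
      cpr μ (fun ω => A j ω = a) F *
      cpr μ (fun ω => ∀ (ar : ℕ → 𝒜) (jj : ℕ), CL ar jj ω = x ar jj) F)
    (φ : ((ℕ → 𝒜) → ℕ → ℒ) → ℝ) :
    wsum μ (fun ω => φ (fun ar jj => CL ar jj ω)) (fun ω => F ω ∧ A j ω = a) =
    cpr μ (fun ω => A j ω = a) F * wsum μ (fun ω => φ (fun ar jj => CL ar jj ω)) F := by
  by_cases hF : pr μ F = 0
  · rw [wsum_zero_of_pr_zero μ hμ _ (fun ω (h : F ω ∧ A j ω = a) => h.1) hF,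
      wsum_zero_of_pr_zero μ hμ _ (fun ω h => h) hF, mul_zero]
  · have hFpos : 0 < pr μ F := pr_pos_of_ne μ hμ hF
    set S : Finset ((ℕ → 𝒜) → ℕ → ℒ) := Finset.univ.image (fun ω ar jj => CL ar jj ω) with hS
    have expand2 : ∀ (c : Ω → Prop),
        wsum μ (fun ω => φ (fun ar jj => CL ar jj ω)) c =
        ∑ x ∈ S, φ x * pr μ (fun ω => c ω ∧ ∀ (ar : ℕ → 𝒜) (jj : ℕ), CL ar jj ω = x ar jj) := by
      intro c
      unfold wsum
      rw [show (∑ ω, if c ω then φ (fun ar jj => CL ar jj ω) * μ ω else 0) =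
          ∑ ω, ∑ x ∈ S, (if c ω ∧ (∀ (ar : ℕ → 𝒜) (jj : ℕ), CL ar jj ω = x ar jj)
            then φ x * μ ω else 0) from Finset.sum_congr rfl (fun ω _ => ?_), Finset.sum_comm]
      · refine Finset.sum_congr rfl (fun x _ => ?_)
        rw [pr, Finset.mul_sum]
        refine Finset.sum_congr rfl (fun ω _ => ?_)
        by_cases h : c ω ∧ ∀ (ar : ℕ → 𝒜) (jj : ℕ), CL ar jj ω = x ar jj <;> simp [h]
      · have hmem : (fun ar jj => CL ar jj ω) ∈ S :=
          hS ▸ Finset.mem_image_of_mem _ (Finset.mem_univ ω)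
        by_cases h : c ω
        · simp only [h, true_and, if_true]
          rw [show (∑ x ∈ S, if (∀ (ar : ℕ → 𝒜) (jj : ℕ), CL ar jj ω = x ar jj)
                then φ x * μ ω else 0) =
              ∑ x ∈ S, if (fun ar jj => CL ar jj ω) = x then φ x * μ ω else 0 from
              Finset.sum_congr rfl (fun x _ => if_congr
                (by constructor
                    · intro hh; funext ar jj; exact hh ar jj
                    · intro hh ar jj; rw [← hh]) rfl rfl),
            Finset.sum_ite_eq S _ _, if_pos hmem]
        · simp [h]
    have key : ∀ (x : (ℕ → 𝒜) → ℕ → ℒ),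
        pr μ (fun ω => (F ω ∧ A j ω = a) ∧ ∀ (ar : ℕ → 𝒜) (jj : ℕ), CL ar jj ω = x ar jj) =
        cpr μ (fun ω => A j ω = a) F *
        pr μ (fun ω => F ω ∧ ∀ (ar : ℕ → 𝒜) (jj : ℕ), CL ar jj ω = x ar jj) := by
      intro x
      have h1 := hSRA x hFpos
      unfold cpr at h1
      have h2 := congrArg (· * pr μ F) h1
      simp only [div_mul_cancel₀ _ hF] at h2
      rw [pr_congr μ (F := fun ω => (A j ω = a ∧ ∀ (ar : ℕ → 𝒜) (jj : ℕ), CL ar jj ω = x ar jj) ∧ F ω)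
        (by tauto), h2,
        pr_congr μ (E := fun ω => F ω ∧ ∀ (ar : ℕ → 𝒜) (jj : ℕ), CL ar jj ω = x ar jj)
        (F := fun ω => (∀ (ar : ℕ → 𝒜) (jj : ℕ), CL ar jj ω = x ar jj) ∧ F ω) (by tauto)]
      unfold cpr
      field_simp
    rw [expand2 (fun ω => F ω ∧ A j ω = a), expand2 F, Finset.mul_sum]
    refine Finset.sum_congr rfl (fun x _ => ?_)
    rw [key x]
    ring
end

def Am {𝒜 : Type} (m0 : ℕ) (ap : Fin m0 → 𝒜) (ab : ℕ → 𝒜) : ℕ → 𝒜 :=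
  fun i => if h : i < m0 then ap ⟨i, h⟩ else ab i

def lext {ℒ : Type} (z : ℒ) {m : ℕ} (lb : Fin m → ℒ) : ℕ → ℒ :=
  fun i => if h : i < m then lb ⟨i, h⟩ else z

def Eev {Ω 𝒜 ℒ : Type} (A : ℕ → Ω → 𝒜) (L : ℕ → Ω → ℒ) (af : ℕ → 𝒜) (lf : ℕ → ℒ)
    (m : ℕ) : Ω → Prop :=
  fun ω => (∀ i < m, A i ω = af i) ∧ (∀ i < m, L i ω = lf i)

def Pev {Ω 𝒜 ℒ : Type} (A : ℕ → Ω → 𝒜) (L : ℕ → Ω → ℒ) (af : ℕ → 𝒜) (lf : ℕ → ℒ)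
    (m : ℕ) : Ω → Prop :=
  fun ω => (∀ i < m, A i ω = af i) ∧ (∀ i ≤ m, L i ω = lf i)

lemma Am_lt {𝒜 : Type} {m0 : ℕ} (ap : Fin m0 → 𝒜) (ab : ℕ → 𝒜) {i : ℕ} (h : i < m0) :
    Am m0 ap ab i = ap ⟨i, h⟩ := dif_pos h

lemma Am_ge {𝒜 : Type} {m0 : ℕ} (ap : Fin m0 → 𝒜) (ab : ℕ → 𝒜) {i : ℕ} (h : m0 ≤ i) :
    Am m0 ap ab i = ab i := dif_neg (by omega)

lemma lext_lt {ℒ : Type} (z : ℒ) {m : ℕ} (lb : Fin m → ℒ) {i : ℕ} (h : i < m) :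
    lext z lb i = lb ⟨i, h⟩ := dif_pos h

lemma lext_snoc_lt {ℒ : Type} (z : ℒ) {m : ℕ} (lb : Fin m → ℒ) (l : ℒ) {i : ℕ} (h : i < m) :
    lext z (Fin.snoc lb l : Fin (m+1) → ℒ) i = lext z lb i := by
  rw [lext_lt z _ (Nat.lt_succ_of_lt h), lext_lt z lb h]
  have he : (⟨i, Nat.lt_succ_of_lt h⟩ : Fin (m+1)) = Fin.castSucc ⟨i, h⟩ := rfl
  rw [he, Fin.snoc_castSucc]

lemma lext_snoc_self {ℒ : Type} (z : ℒ) {m : ℕ} (lb : Fin m → ℒ) (l : ℒ) :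
    lext z (Fin.snoc lb l : Fin (m+1) → ℒ) m = l := by
  rw [lext_lt z _ (Nat.lt_succ_self m)]
  have : (⟨m, Nat.lt_succ_self m⟩ : Fin (m+1)) = Fin.last m := rfl
  rw [this, Fin.snoc_last]

section Invariant
variable {Ω 𝒜 ℒ : Type} [Fintype Ω] [Fintype 𝒜] [Fintype ℒ]

lemma invariant (μ : Ω → ℝ) (hμ : ∀ ω, 0 ≤ μ ω)
    (K : ℕ) (A : ℕ → Ω → 𝒜) (CL : (ℕ → 𝒜) → ℕ → Ω → ℒ) (L : ℕ → Ω → ℒ) (Y : ℒ → ℝ)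
    (SRA : ∀ j ≤ K, ∀ (a : 𝒜) (x : (ℕ → 𝒜) → ℕ → ℒ) (ab : ℕ → 𝒜) (lb : ℕ → ℒ),
      pr μ (fun ω => (∀ i < j, A i ω = ab i) ∧ (∀ i ≤ j, L i ω = lb i)) > 0 →
      cpr μ (fun ω => A j ω = a ∧ ∀ (ar : ℕ → 𝒜) (jj : ℕ), CL ar jj ω = x ar jj)
        (fun ω => (∀ i < j, A i ω = ab i) ∧ (∀ i ≤ j, L i ω = lb i)) =
      cpr μ (fun ω => A j ω = a)
        (fun ω => (∀ i < j, A i ω = ab i) ∧ (∀ i ≤ j, L i ω = lb i)) *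
      cpr μ (fun ω => ∀ (ar : ℕ → 𝒜) (jj : ℕ), CL ar jj ω = x ar jj)
        (fun ω => (∀ i < j, A i ω = ab i) ∧ (∀ i ≤ j, L i ω = lb i)))
    (t m0 : ℕ) (hm0 : m0 ≤ t) (ht2 : t ≤ K) (ab : ℕ → 𝒜)
    (POS : ∀ j, m0 ≤ j → j ≤ t → ∀ ω, μ ω > 0 →
      cpr μ (fun ω' => A j ω' = ab j)
        (fun ω' => (∀ i < j, A i ω' = A i ω) ∧ (∀ i ≤ j, L i ω' = L i ω)) > 0)
    (z : ℒ) (m : ℕ) (hm : m0 ≤ m) (hmt : m ≤ t + 1) :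
    ex μ (fun ω => Y (CL (fun i => if i < m0 then A i ω else ab i) (t+1) ω)) =
    ∑ ap : Fin m0 → 𝒜, ∑ lb : Fin m → ℒ,
      wsum μ (fun ω => Y (CL (fun i => if i < m0 then A i ω else ab i) (t+1) ω))
        (Eev A L (Am m0 ap ab) (lext z lb) m) *
      ∏ j ∈ Finset.Ico m0 m,
        (cpr μ (fun ω => A j ω = ab j) (Pev A L (Am m0 ap ab) (lext z lb) j))⁻¹ := by
  set g : Ω → ℝ := fun ω => Y (CL (fun i => if i < m0 then A i ω else ab i) (t+1) ω) with hg
  induction m, hm using Nat.le_induction with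
  | base =>
    rw [Finset.Ico_self]
    simp only [Finset.prod_empty, mul_one]
    unfold ex wsum
    rw [show (∑ ap : Fin m0 → 𝒜, ∑ lb : Fin m0 → ℒ, ∑ ω,
        if Eev A L (Am m0 ap ab) (lext z lb) m0 ω then g ω * μ ω else 0) =
        ∑ ω, ∑ ap : Fin m0 → 𝒜, ∑ lb : Fin m0 → ℒ,
        (if Eev A L (Am m0 ap ab) (lext z lb) m0 ω then g ω * μ ω else 0) from
      (Finset.sum_congr rfl (fun ap _ => Finset.sum_comm)).trans Finset.sum_comm]
    symm
    refine Finset.sum_congr rfl (fun ω _ => ?_)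
    have hiff : ∀ (ap : Fin m0 → 𝒜) (lb : Fin m0 → ℒ),
        Eev A L (Am m0 ap ab) (lext z lb) m0 ω ↔
        (lb = fun i : Fin m0 => L i.1 ω) ∧ (ap = fun i : Fin m0 => A i.1 ω) := by
      intro ap lb
      constructor
      · rintro ⟨hA, hL⟩
        constructor
        · funext i; rw [← (hL i.1 i.2).trans (lext_lt z lb i.2)]
        · funext i; rw [← (hA i.1 i.2).trans (Am_lt ap ab i.2)]
      · rintro ⟨rfl, rfl⟩
        refine ⟨fun i hi => ?_, fun i hi => ?_⟩
        · exact (Am_lt (fun i : Fin m0 => A i.1 ω) ab hi).symm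
        · exact (lext_lt z (fun i : Fin m0 => L i.1 ω) hi).symm
    calc (∑ ap : Fin m0 → 𝒜, ∑ lb : Fin m0 → ℒ,
          if Eev A L (Am m0 ap ab) (lext z lb) m0 ω then g ω * μ ω else 0)
        = ∑ ap : Fin m0 → 𝒜, ∑ lb : Fin m0 → ℒ,
          if lb = (fun i : Fin m0 => L i.1 ω) then
            (if ap = (fun i : Fin m0 => A i.1 ω) then g ω * μ ω else 0) else 0 :=
          Finset.sum_congr rfl (fun ap _ => Finset.sum_congr rfl (fun lb _ =>
            (if_congr (hiff ap lb) rfl rfl).trans (ite_and _ _ _ _)))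
      _ = ∑ ap : Fin m0 → 𝒜,
          (if ap = (fun i : Fin m0 => A i.1 ω) then g ω * μ ω else 0) :=
          Finset.sum_congr rfl (fun ap _ =>
            (Finset.sum_ite_eq' Finset.univ (fun i : Fin m0 => L i.1 ω)
              (fun _ => if ap = (fun i : Fin m0 => A i.1 ω) then g ω * μ ω else 0)).trans
            (if_pos (Finset.mem_univ _)))
      _ = g ω * μ ω :=
          (Finset.sum_ite_eq' Finset.univ (fun i : Fin m0 => A i.1 ω)
            (fun _ => g ω * μ ω)).trans (if_pos (Finset.mem_univ _))
  | succ m hm ih =>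
    have hmt' : m ≤ t + 1 := Nat.le_of_succ_le hmt
    have hmtt : m ≤ t := by omega
    have hmK : m ≤ K := le_trans hmtt ht2
    rw [ih hmt']
    refine Finset.sum_congr rfl (fun ap _ => ?_)
    set af : ℕ → 𝒜 := Am m0 ap ab with haf
    rw [show (∑ lb : Fin (m+1) → ℒ,
        wsum μ g (Eev A L af (lext z lb) (m+1)) *
        ∏ j ∈ Finset.Ico m0 (m+1), (cpr μ (fun ω => A j ω = ab j) (Pev A L af (lext z lb) j))⁻¹) =
        ∑ lb : Fin m → ℒ, ∑ l : ℒ,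
        wsum μ g (Eev A L af (lext z (Fin.snoc lb l)) (m+1)) *
        ∏ j ∈ Finset.Ico m0 (m+1), (cpr μ (fun ω => A j ω = ab j)
          (Pev A L af (lext z (Fin.snoc lb l)) j))⁻¹ from
      ((Fintype.sum_equiv (⟨fun p => Fin.snoc p.1 p.2, fun f => (Fin.init f, f (Fin.last m)),
          fun p => by simp, fun f => by simp⟩ : (Fin m → ℒ) × ℒ ≃ (Fin (m+1) → ℒ)) (fun p => wsum μ g (Eev A L af (lext z (Fin.snoc p.1 p.2)) (m+1)) *
        ∏ j ∈ Finset.Ico m0 (m+1), (cpr μ (fun ω => A j ω = ab j)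
          (Pev A L af (lext z (Fin.snoc p.1 p.2)) j))⁻¹) _ (fun p => rfl)).symm).trans
        (Fintype.sum_prod_type _)]
    refine Finset.sum_congr rfl (fun lb _ => ?_)
    set Pi : ℝ := ∏ j ∈ Finset.Ico m0 m, (cpr μ (fun ω => A j ω = ab j)
      (Pev A L af (lext z lb) j))⁻¹ with hPi
    have hsp : ∀ l : ℒ,
        (∏ j ∈ Finset.Ico m0 (m+1), (cpr μ (fun ω => A j ω = ab j)
          (Pev A L af (lext z (Fin.snoc lb l)) j))⁻¹) =
        Pi * (cpr μ (fun ω => A m ω = ab m) (Pev A L af (lext z (Fin.snoc lb l)) m))⁻¹ := by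
      intro l
      rw [Finset.prod_Ico_succ_top hm]
      congr 1
      refine Finset.prod_congr rfl (fun j hj => ?_)
      have hjm : j < m := (Finset.mem_Ico.1 hj).2
      refine congrArg Inv.inv (cpr_congr μ (fun _ => Iff.rfl) (fun ω => ?_))
      unfold Pev
      constructor
      · rintro ⟨h1, h2⟩
        exact ⟨h1, fun i hi => (h2 i hi).trans (lext_snoc_lt z lb l (lt_of_le_of_lt hi hjm))⟩
      · rintro ⟨h1, h2⟩
        exact ⟨h1, fun i hi => (h2 i hi).trans (lext_snoc_lt z lb l (lt_of_le_of_lt hi hjm)).symm⟩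
    have hgφ : ∀ (lf : ℕ → ℒ) (ω : Ω), Pev A L af lf m ω →
        g ω = Y ((fun ar jj => CL ar jj ω) af (t+1)) := by
      intro lf ω hω
      have hfe : (fun i => if i < m0 then A i ω else ab i) = af := by
        funext i
        by_cases hi : i < m0
        · rw [if_pos hi, haf, Am_lt ap ab hi, ← Am_lt ap ab hi, ← haf]
          exact hω.1 i (lt_of_lt_of_le hi hm)
        · rw [if_neg hi, haf, Am_ge ap ab (by omega)]
      rw [hg]
      exact congrArg Y (congrFun (congrFun (congrArg CL hfe) (t+1)) ω)
    have hkey : ∀ l : ℒ,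
        wsum μ g (Eev A L af (lext z (Fin.snoc lb l)) (m+1)) =
        cpr μ (fun ω => A m ω = ab m) (Pev A L af (lext z (Fin.snoc lb l)) m) *
        wsum μ g (Pev A L af (lext z (Fin.snoc lb l)) m) := by
      intro l
      set lf : ℕ → ℒ := lext z (Fin.snoc lb l) with hlf
      have hEiff : ∀ ω, Eev A L af lf (m+1) ω ↔ (Pev A L af lf m ω ∧ A m ω = ab m) := by
        intro ω
        unfold Eev Pev
        constructor
        · rintro ⟨h1, h2⟩
          refine ⟨⟨fun i hi => h1 i (Nat.lt_succ_of_lt hi),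
            fun i hi => h2 i (Nat.lt_succ_of_le hi)⟩, ?_⟩
          rw [h1 m (Nat.lt_succ_self m), haf, Am_ge ap ab hm]
        · rintro ⟨⟨h1, h2⟩, h3⟩
          refine ⟨fun i hi => ?_, fun i hi => h2 i (Nat.lt_succ_iff.1 hi)⟩
          rcases Nat.lt_succ_iff_lt_or_eq.1 hi with h | h
          · exact h1 i h
          · subst h; rw [h3, haf, Am_ge ap ab hm]
      calc wsum μ g (Eev A L af lf (m+1))
          = wsum μ (fun ω => (fun x : (ℕ → 𝒜) → ℕ → ℒ => Y (x af (t+1)))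
              (fun ar jj => CL ar jj ω)) (fun ω => Pev A L af lf m ω ∧ A m ω = ab m) :=
            wsum_congr' μ hEiff (fun ω hω => hgφ lf ω hω.1)
        _ = cpr μ (fun ω => A m ω = ab m) (Pev A L af lf m) *
            wsum μ (fun ω => (fun x : (ℕ → 𝒜) → ℕ → ℒ => Y (x af (t+1)))
              (fun ar jj => CL ar jj ω)) (Pev A L af lf m) :=
            sra_phi μ hμ A CL m (ab m) (Pev A L af lf m)
              (fun x hpos => SRA m hmK (ab m) x af lf hpos)
              (fun x => Y (x af (t+1)))
        _ = cpr μ (fun ω => A m ω = ab m) (Pev A L af lf m) * wsum μ g (Pev A L af lf m) := by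
            rw [wsum_congr' μ (E := Pev A L af lf m) (fun ω => Iff.rfl)
              (fun ω hω => (hgφ lf ω hω).symm)]
    have hterm : ∀ l : ℒ,
        wsum μ g (Eev A L af (lext z (Fin.snoc lb l)) (m+1)) *
        ∏ j ∈ Finset.Ico m0 (m+1), (cpr μ (fun ω => A j ω = ab j)
          (Pev A L af (lext z (Fin.snoc lb l)) j))⁻¹ =
        wsum μ g (Pev A L af (lext z (Fin.snoc lb l)) m) * Pi := by
      intro l
      rw [hsp l, hkey l]
      set c : ℝ := cpr μ (fun ω => A m ω = ab m) (Pev A L af (lext z (Fin.snoc lb l)) m)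
        with hc
      by_cases hz : pr μ (Pev A L af (lext z (Fin.snoc lb l)) m) = 0
      · rw [wsum_zero_of_pr_zero μ hμ g (fun ω h => h) hz]
        ring
      · have hcz : c ≠ 0 := by
          obtain ⟨ω, hω, hμω⟩ := pr_pos_exists μ hμ (pr_pos_of_ne μ hμ hz)
          have hpos := POS m hm hmtt ω hμω
          have : c = cpr μ (fun ω' => A m ω' = ab m)
              (fun ω' => (∀ i < m, A i ω' = A i ω) ∧ (∀ i ≤ m, L i ω' = L i ω)) := by
            refine cpr_congr μ (fun _ => Iff.rfl) (fun ω' => ?_)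
            constructor
            · rintro ⟨h1, h2⟩
              exact ⟨fun i hi => (h1 i hi).trans (hω.1 i hi).symm,
                fun i hi => (h2 i hi).trans (hω.2 i hi).symm⟩
            · rintro ⟨h1, h2⟩
              exact ⟨fun i hi => (h1 i hi).trans (hω.1 i hi),
                fun i hi => (h2 i hi).trans (hω.2 i hi)⟩
          rw [this]
          exact ne_of_gt hpos
        field_simp
    rw [Finset.sum_congr rfl (fun l _ => hterm l), ← Finset.sum_mul]
    congr 1
    have hPiff : ∀ (l : ℒ) (ω : Ω), Pev A L af (lext z (Fin.snoc lb l)) m ω ↔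
        (Eev A L af (lext z lb) m ω ∧ L m ω = l) := by
      intro l ω
      unfold Eev Pev
      constructor
      · rintro ⟨h1, h2⟩
        refine ⟨⟨h1, fun i hi => (h2 i (le_of_lt hi)).trans (lext_snoc_lt z lb l hi)⟩, ?_⟩
        rw [h2 m (le_refl m), lext_snoc_self]
      · rintro ⟨⟨h1, h2⟩, h3⟩
        refine ⟨h1, fun i hi => ?_⟩
        rcases Nat.lt_succ_iff_lt_or_eq.1 (Nat.lt_succ_of_le hi) with h | h
        · exact (h2 i h).trans (lext_snoc_lt z lb l h).symm
        · subst h; rw [h3, lext_snoc_self]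
    rw [Finset.sum_congr rfl (fun l _ => wsum_congr μ g (hPiff l))]
    unfold wsum
    rw [Finset.sum_comm]
    refine Finset.sum_congr rfl (fun ω _ => ?_)
    by_cases hE : Eev A L af (lext z lb) m ω
    · rw [if_pos hE]
      symm
      trans (∑ l : ℒ, if L m ω = l then g ω * μ ω else 0)
      · refine Finset.sum_congr rfl (fun l _ => ?_)
        by_cases h : L m ω = l
        · rw [if_pos h]; exact if_pos ⟨hE, h⟩
        · rw [if_neg h]; exact if_neg (fun hh => h hh.2)
      · rw [Finset.sum_ite_eq Finset.univ (L m ω) (fun _ => g ω * μ ω)]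
        exact if_pos (Finset.mem_univ _)
    · rw [if_neg hE]
      symm
      exact Finset.sum_eq_zero (fun l _ => if_neg (fun h => hE h.1))

end Invariant

lemma tele (e q : ℕ → ℝ) (a : ℕ) : ∀ b, a ≤ b → (∀ j, a ≤ j → j ≤ b → e j ≠ 0) →
    (∏ j ∈ Finset.Ico a b, (q j / e j)) * e a =
    (∏ j ∈ Finset.Ico a b, (q j / e (j+1))) * e b := by
  intro b hab
  induction b, hab using Nat.le_induction with
  | base => intro _; rw [Finset.Ico_self]; simp
  | succ b hb ih =>
    intro hne
    have heb : e b ≠ 0 := hne b hb (Nat.le_succ b)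
    have heb1 : e (b+1) ≠ 0 := hne (b+1) (Nat.le_succ_of_le hb) (le_refl _)
    have ih' := ih (fun j h1 h2 => hne j h1 (Nat.le_succ_of_le h2))
    rw [Finset.prod_Ico_succ_top hb, Finset.prod_Ico_succ_top hb]
    calc (∏ j ∈ Finset.Ico a b, (q j / e j)) * (q b / e b) * e a
        = ((∏ j ∈ Finset.Ico a b, (q j / e j)) * e a) * (q b / e b) := by ring
      _ = ((∏ j ∈ Finset.Ico a b, (q j / e (j+1))) * e b) * (q b / e b) := by rw [ih']
      _ = (∏ j ∈ Finset.Ico a b, (q j / e (j+1))) * q b := by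
          rw [mul_assoc, mul_comm (e b) (q b / e b), div_mul_cancel₀ _ heb]
      _ = (∏ j ∈ Finset.Ico a b, (q j / e (j+1))) * (q b / e (b+1)) * e (b+1) := by
          rw [mul_assoc (∏ j ∈ Finset.Ico a b, (q j / e (j+1))), div_mul_cancel₀ _ heb1]


/-- G-computation identifiability for HRMSM parameters. Under
consistency, temporal ordering, SRA and positivity, the mean of the
history-restricted counterfactual outcome `Y_{ā(t-s+1,t)}(t+1)` is given by the
G-computation formula over the restricted history. -/
theorem hrmsm_gcomputation
    {Ω 𝒜 ℒ : Type} [Fintype Ω] [Fintype 𝒜] [Fintype ℒ]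
    (μ : Ω → ℝ) (hμ : ∀ ω, 0 ≤ μ ω) (hsum : ∑ ω, μ ω = 1)
    (K s : ℕ) (hs : 1 ≤ s) (hsK : s ≤ K + 1)
    (A : ℕ → Ω → 𝒜) (CL : (ℕ → 𝒜) → ℕ → Ω → ℒ) (L : ℕ → Ω → ℒ) (Y : ℒ → ℝ)
    (hTO : ∀ (a a' : ℕ → 𝒜) (j : ℕ), (∀ i < j, a i = a' i) → ∀ ω, CL a j ω = CL a' j ω)
    (hcons : ∀ j ω, L j ω = CL (fun i => A i ω) j ω)
    (SRA : ∀ j ≤ K, ∀ (a : 𝒜) (x : (ℕ → 𝒜) → ℕ → ℒ) (ab : ℕ → 𝒜) (lb : ℕ → ℒ),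
      pr μ (fun ω => (∀ i < j, A i ω = ab i) ∧ (∀ i ≤ j, L i ω = lb i)) > 0 →
      cpr μ (fun ω => A j ω = a ∧ ∀ (ar : ℕ → 𝒜) (jj : ℕ), CL ar jj ω = x ar jj)
        (fun ω => (∀ i < j, A i ω = ab i) ∧ (∀ i ≤ j, L i ω = lb i)) =
      cpr μ (fun ω => A j ω = a)
        (fun ω => (∀ i < j, A i ω = ab i) ∧ (∀ i ≤ j, L i ω = lb i)) *
      cpr μ (fun ω => ∀ (ar : ℕ → 𝒜) (jj : ℕ), CL ar jj ω = x ar jj)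
        (fun ω => (∀ i < j, A i ω = ab i) ∧ (∀ i ≤ j, L i ω = lb i)))
    (t : ℕ) (ht1 : s - 1 ≤ t) (ht2 : t ≤ K) (ab : ℕ → 𝒜)
    (POS : ∀ j, t + 1 - s ≤ j → j ≤ t → ∀ ω, μ ω > 0 →
      cpr μ (fun ω' => A j ω' = ab j)
        (fun ω' => (∀ i < j, A i ω' = A i ω) ∧ (∀ i ≤ j, L i ω' = L i ω)) > 0) :
    ex μ (fun ω => Y (CL (fun i => if i < t + 1 - s then A i ω else ab i) (t + 1) ω)) =
    ∑ ap : Fin (t + 1 - s) → 𝒜, ∑ lb : Fin (t + 1) → ℒ,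
      cex μ (fun ω => Y (L (t + 1) ω))
        (fun ω => (∀ i : Fin (t + 1 - s), A i.1 ω = ap i) ∧
          (∀ i : ℕ, t + 1 - s ≤ i → i ≤ t → A i ω = ab i) ∧
          (∀ i : Fin (t + 1), L i.1 ω = lb i)) *
      (∏ j ∈ Finset.univ.filter (fun j : Fin (t + 1) => t + 1 - s ≤ j.1),
        cpr μ (fun ω => L j.1 ω = lb j)
          (fun ω => (∀ i : Fin (t + 1 - s), A i.1 ω = ap i) ∧
            (∀ i : ℕ, t + 1 - s ≤ i → i < j.1 → A i ω = ab i) ∧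
            (∀ i : Fin (t + 1), i.1 < j.1 → L i.1 ω = lb i))) *
      pr μ (fun ω => (∀ i : Fin (t + 1 - s), A i.1 ω = ap i) ∧
        (∀ i : Fin (t + 1), i.1 < t + 1 - s → L i.1 ω = lb i)) := by
  have hΩ : Nonempty Ω := by
    by_contra h
    rw [not_nonempty_iff] at h
    rw [Finset.univ_eq_empty, Finset.sum_empty] at hsum
    exact absurd hsum (by norm_num)
  obtain ⟨ω0⟩ := hΩ
  set z : ℒ := L 0 ω0 with hz
  set m0 : ℕ := t + 1 - s with hm0def
  have hm0 : m0 ≤ t := by omega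
  have hm0t1 : m0 ≤ t + 1 := by omega
  rw [invariant μ hμ K A CL L Y SRA t m0 hm0 ht2 ab POS z (t+1) hm0t1 (le_refl _)]
  refine Finset.sum_congr rfl (fun ap _ => Finset.sum_congr rfl (fun lb _ => ?_))
  set af : ℕ → 𝒜 := Am m0 ap ab with haf
  set lf : ℕ → ℒ := lext z lb with hlf
  set g : Ω → ℝ := fun ω => Y (CL (fun i => if i < m0 then A i ω else ab i) (t+1) ω) with hg
  -- (iii): counter factual equals observed on the big event
  have hYg : ∀ ω, Eev A L af lf (t+1) ω → Y (L (t + 1) ω) = g ω := by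
    intro ω hω
    rw [hg, hcons (t+1) ω]
    refine congrArg Y (hTO _ _ (t+1) (fun i hi => ?_) ω)
    by_cases him : i < m0
    · rw [if_pos him]
    · rw [if_neg him]
      rw [hω.1 i hi, haf, Am_ge ap ab (by omega)]
  -- (ii): F1 iff
  have hF1iff : ∀ ω, ((∀ i : Fin m0, A i.1 ω = ap i) ∧
      (∀ i : ℕ, m0 ≤ i → i ≤ t → A i ω = ab i) ∧
      (∀ i : Fin (t + 1), L i.1 ω = lb i)) ↔ Eev A L af lf (t+1) ω := by
    intro ω
    unfold Eev
    constructor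
    · rintro ⟨h1, h2, h3⟩
      refine ⟨fun i hi => ?_, fun i hi => ?_⟩
      · by_cases him : i < m0
        · rw [haf, Am_lt ap ab him]; exact h1 ⟨i, him⟩
        · rw [haf, Am_ge ap ab (by omega)]; exact h2 i (by omega) (by omega)
      · rw [hlf, lext_lt z lb hi]; exact h3 ⟨i, hi⟩
    · rintro ⟨h1, h2⟩
      refine ⟨fun i => ?_, fun i hi1 hi2 => ?_, fun i => ?_⟩
      · rw [h1 i.1 (by omega), haf, Am_lt ap ab i.2]
      · rw [h1 i (by omega), haf, Am_ge ap ab hi1]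
      · rw [h2 i.1 i.2, hlf, lext_lt z lb i.2, Fin.eta]
  -- (vi): the base event iff
  have hBiff : ∀ ω, ((∀ i : Fin m0, A i.1 ω = ap i) ∧
      (∀ i : Fin (t + 1), i.1 < m0 → L i.1 ω = lb i)) ↔ Eev A L af lf m0 ω := by
    intro ω
    unfold Eev
    constructor
    · rintro ⟨h1, h2⟩
      refine ⟨fun i hi => ?_, fun i hi => ?_⟩
      · rw [haf, Am_lt ap ab hi]; exact h1 ⟨i, hi⟩
      · rw [hlf, lext_lt z lb (by omega)]; exact h2 ⟨i, by omega⟩ hi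
    · rintro ⟨h1, h2⟩
      refine ⟨fun i => ?_, fun i hi => ?_⟩
      · rw [h1 i.1 i.2, haf, Am_lt ap ab i.2]
      · rw [h2 i.1 hi, hlf, lext_lt z lb (by omega), Fin.eta]
  -- (vii): numerator events
  have hPiff : ∀ j, j ≤ t → ∀ ω, (L j ω = lf j ∧ Eev A L af lf j ω) ↔ Pev A L af lf j ω := by
    intro j hj ω
    unfold Eev Pev
    constructor
    · rintro ⟨h0, h1, h2⟩
      exact ⟨h1, fun i hi => (Nat.lt_succ_iff_lt_or_eq.1 (Nat.lt_succ_of_le hi)).elim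
        (fun h => h2 i h) (fun h => by subst h; exact h0)⟩
    · rintro ⟨h1, h2⟩
      exact ⟨h2 j (le_refl j), h1, fun i hi => h2 i (le_of_lt hi)⟩
  have hAPiff : ∀ j, m0 ≤ j → ∀ ω,
      ((A j ω = ab j) ∧ Pev A L af lf j ω) ↔ Eev A L af lf (j+1) ω := by
    intro j hj ω
    unfold Eev Pev
    constructor
    · rintro ⟨h0, h1, h2⟩
      refine ⟨fun i hi => ?_, fun i hi => h2 i (Nat.lt_succ_iff.1 hi)⟩
      rcases Nat.lt_succ_iff_lt_or_eq.1 hi with h | h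
      · exact h1 i h
      · subst h; rw [h0, haf, Am_ge ap ab hj]
    · rintro ⟨h1, h2⟩
      refine ⟨?_, fun i hi => h1 i (Nat.lt_succ_of_lt hi), fun i hi => h2 i (Nat.lt_succ_of_le hi)⟩
      rw [h1 j (Nat.lt_succ_self j), haf, Am_ge ap ab hj]
  -- (v): convert theorem product to Ico product
  have hprod : (∏ j ∈ Finset.univ.filter (fun j : Fin (t + 1) => m0 ≤ j.1),
        cpr μ (fun ω => L j.1 ω = lb j)
          (fun ω => (∀ i : Fin m0, A i.1 ω = ap i) ∧
            (∀ i : ℕ, m0 ≤ i → i < j.1 → A i ω = ab i) ∧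
            (∀ i : Fin (t + 1), i.1 < j.1 → L i.1 ω = lb i))) =
      ∏ j ∈ Finset.Ico m0 (t+1),
        (pr μ (Pev A L af lf j) / pr μ (Eev A L af lf j)) := by
    refine Finset.prod_bij' (fun (j : Fin (t+1)) _ => j.1)
      (fun (n : ℕ) hn => (⟨n, (Finset.mem_Ico.1 hn).2⟩ : Fin (t+1))) ?_ ?_ ?_ ?_ ?_
    · intro j hj
      exact Finset.mem_Ico.2 ⟨(Finset.mem_filter.1 hj).2, j.2⟩
    · intro n hn
      exact Finset.mem_filter.2 ⟨Finset.mem_univ _, (Finset.mem_Ico.1 hn).1⟩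
    · intro j hj; exact Fin.eta j j.2
    · intro n hn; rfl
    · intro j hj
      have hjm0 : m0 ≤ j.1 := (Finset.mem_filter.1 hj).2
      have hjt : j.1 ≤ t := by omega
      have hDiff : ∀ ω, ((∀ i : Fin m0, A i.1 ω = ap i) ∧
          (∀ i : ℕ, m0 ≤ i → i < j.1 → A i ω = ab i) ∧
          (∀ i : Fin (t + 1), i.1 < j.1 → L i.1 ω = lb i)) ↔ Eev A L af lf j.1 ω := by
        intro ω
        unfold Eev
        constructor
        · rintro ⟨h1, h2, h3⟩
          refine ⟨fun i hi => ?_, fun i hi => ?_⟩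
          · by_cases him : i < m0
            · rw [haf, Am_lt ap ab him]; exact h1 ⟨i, him⟩
            · rw [haf, Am_ge ap ab (by omega)]; exact h2 i (by omega) hi
          · rw [hlf, lext_lt z lb (by omega)]; exact h3 ⟨i, by omega⟩ hi
        · rintro ⟨h1, h2⟩
          refine ⟨fun i => ?_, fun i hi1 hi2 => ?_, fun i hi => ?_⟩
          · rw [h1 i.1 (by omega), haf, Am_lt ap ab i.2]
          · rw [h1 i (by omega), haf, Am_ge ap ab hi1]
          · rw [h2 i.1 hi, hlf, lext_lt z lb (by omega), Fin.eta]
      have hnum : ∀ ω, (L j.1 ω = lb j) ↔ (L j.1 ω = lf j.1) := by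
        intro ω
        rw [hlf, lext_lt z lb j.2, Fin.eta]
      rw [show cpr μ (fun ω => L j.1 ω = lb j)
            (fun ω => (∀ i : Fin m0, A i.1 ω = ap i) ∧
              (∀ i : ℕ, m0 ≤ i → i < j.1 → A i ω = ab i) ∧
              (∀ i : Fin (t + 1), i.1 < j.1 → L i.1 ω = lb i)) =
          cpr μ (fun ω => L j.1 ω = lf j.1) (Eev A L af lf j.1) from
        cpr_congr μ hnum hDiff]
      unfold cpr
      rw [pr_congr μ (hPiff j.1 hjt)]
  -- (vii'): invariant product factors
  have hfac : ∀ j ∈ Finset.Ico m0 (t+1),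
      (cpr μ (fun ω => A j ω = ab j) (Pev A L af lf j))⁻¹ =
      pr μ (Pev A L af lf j) / pr μ (Eev A L af lf (j+1)) := by
    intro j hj
    have hjm0 : m0 ≤ j := (Finset.mem_Ico.1 hj).1
    unfold cpr
    rw [pr_congr μ (hAPiff j hjm0), inv_div]
  -- final algebra
  rw [cex_eq μ, wsum_congr' μ hF1iff hYg, pr_congr μ hF1iff, pr_congr μ hBiff, hprod,
    Finset.prod_congr rfl hfac]
  by_cases hzz : pr μ (Eev A L af lf (t+1)) = 0
  · rw [wsum_zero_of_pr_zero μ hμ g (fun ω h => h) hzz, hzz]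
    simp
  · have hnest : ∀ j, j ≤ t + 1 → ∀ ω, Eev A L af lf (t+1) ω → Eev A L af lf j ω := by
      intro j hj ω hω
      exact ⟨fun i hi => hω.1 i (by omega), fun i hi => hω.2 i (by omega)⟩
    have hne : ∀ j, m0 ≤ j → j ≤ t + 1 → pr μ (Eev A L af lf j) ≠ 0 := by
      intro j _ hj
      have := pr_mono μ hμ (hnest j hj)
      have h2 := pr_pos_of_ne μ hμ hzz
      exact ne_of_gt (lt_of_lt_of_le h2 this)
    have htele := tele (fun j => pr μ (Eev A L af lf j)) (fun j => pr μ (Pev A L af lf j))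
      m0 (t+1) hm0t1 (fun j h1 h2 => hne j h1 h2)
    set w : ℝ := wsum μ g (Eev A L af lf (t+1)) with hw
    set P1 : ℝ := ∏ j ∈ Finset.Ico m0 (t+1),
      (pr μ (Pev A L af lf j) / pr μ (Eev A L af lf j)) with hP1
    set P2 : ℝ := ∏ j ∈ Finset.Ico m0 (t+1),
      (pr μ (Pev A L af lf j) / pr μ (Eev A L af lf (j+1))) with hP2
    have hET : pr μ (Eev A L af lf (t+1)) ≠ 0 := hzz
    symm
    calc w / pr μ (Eev A L af lf (t+1)) * P1 * pr μ (Eev A L af lf m0)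
        = (P1 * pr μ (Eev A L af lf m0)) * w / pr μ (Eev A L af lf (t+1)) := by ring
      _ = (P2 * pr μ (Eev A L af lf (t+1))) * w / pr μ (Eev A L af lf (t+1)) := by
          rw [htele]
      _ = w * P2 := by field_simp
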